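/- Let A be an n×n pairwise comparison matrix, let w be a positive vector and λ a real number with A·w = λ·w, and let Â be the pairwise comparison matrix obtained from A by a transformation of row multiplication on alternative i by a factor α > 0. Define the vector ŵ by ŵ_i = α·w_i and ŵ_j = w_j for all j ≠ i. Then ŵ is a positive vector satisfying Â·ŵ = λ·ŵ. (Consequently, the Eigenvector Method is invariant to row multiplication: the Perron weight of alternative i relative to every other alternative is multiplied by α.) -/

import Mathlib

/-- A pairwise comparison matrix: all entries positive and `A j i = 1 / A i j`. -/
def IsPCM {n : ℕ} (A : Matrix (Fin n) (Fin n) ℝ) : Prop :=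
  (∀ i j, 0 < A i j) ∧ ∀ i j, A j i = 1 / A i j

/-- Transformation of row multiplication on alternative `i` by factor `α`. -/
noncomputable def rowMul {n : ℕ} (A : Matrix (Fin n) (Fin n) ℝ) (i : Fin n) (α : ℝ) :
    Matrix (Fin n) (Fin n) ℝ :=
  Matrix.of fun k l =>
    if k = i ∧ l ≠ i then α * A k l
    else if l = i ∧ k ≠ i then A k l / α
    else A k l

/-- If `w` is a positive eigenvector of a pairwise comparison matrix `A` with
eigenvalue `lam`, then the vector `ŵ` with `ŵ i = α * w i` and `ŵ j = w j` for `j ≠ i`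
is a positive eigenvector of the row-multiplied matrix `rowMul A i α` with the same
eigenvalue. -/
theorem eigenvector_of_rowMul {n : ℕ} (A : Matrix (Fin n) (Fin n) ℝ)
    (hA : IsPCM A) (i : Fin n) (α : ℝ) (hα : 0 < α)
    (w : Fin n → ℝ) (hw : ∀ j, 0 < w j) (lam : ℝ)
    (heig : A.mulVec w = lam • w) :
    (∀ j, 0 < (fun j => if j = i then α * w j else w j) j) ∧
      (rowMul A i α).mulVec (fun j => if j = i then α * w j else w j) =
        lam • (fun j => if j = i then α * w j else w j) := by
  constructor
  · intro j
    by_cases h : j = i <;> simp [h]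
    exact mul_pos hα (hw i)
    exact hw j
  · funext k
    have hk := congrFun heig k
    simp only [Matrix.mulVec, dotProduct, Pi.smul_apply, smul_eq_mul] at hk ⊢
    by_cases hki : k = i
    · subst hki
      have : ∀ l ∈ Finset.univ, rowMul A k α k l * (if l = k then α * w l else w l)
          = α * (A k l * w l) := by
        intro l _
        by_cases hl : l = k
        · subst hl; simp [rowMul]; ring
        · simp [rowMul, hl]; ring
      rw [Finset.sum_congr rfl this, ← Finset.mul_sum, hk]
      simp; ring
    · have : ∀ l ∈ Finset.univ, rowMul A i α k l * (if l = i then α * w l else w l)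
          = A k l * w l := by
        intro l _
        by_cases hl : l = i
        · subst hl
          simp [rowMul, hki]
          field_simp
        · simp [rowMul, hl, hki]
      rw [Finset.sum_congr rfl this, hk]
      simp [hki]
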